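/- arXiv:1206.1143 — 2 statements merged into one kernel-verified Lean document; each statement's English description precedes it below -/
import Mathlib

section
/- There exists a constant C such that every vertex of the induced augmented tree (X, 𝔈) has at most C neighbours; in particular, (X, 𝔈) is a locally finite graph. -/
open Metric Set Filter

attribute [local instance] Classical.propDecidable

noncomputable section

namespace MoranPaper

/-- Points of `ℝ^d`. -/
abbrev Pt (d : ℕ) := EuclideanSpace ℝ (Fin d)

/-- `w` is an admissible word: the letter at (0-indexed) position `j`
(corresponding to step `j+1`) lies in `[1, n j]`, where `n j` encodes `n_{j+1}`. -/
def IsWord (n : ℕ → ℕ) (w : List ℕ) : Prop :=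
  ∀ j (h : j < w.length), 1 ≤ w.get ⟨j, h⟩ ∧ w.get ⟨j, h⟩ ≤ n j

/-- The set `D_k` of words of length `k`. -/
def WordsLen (n : ℕ → ℕ) (k : ℕ) : Set (List ℕ) := {w | IsWord n w ∧ w.length = k}

/-- A Moran structure on the data `(J, (n_k), (r_k))`:  a family of sets `J_w`
indexed by words, with `J_∅ = J`, each `J_w` a similar copy of `J`, children
contained in the parent with pairwise disjoint interiors, and prescribed
diameter ratios. -/
structure MoranStructure (d : ℕ) (J : Set (Pt d)) (n : ℕ → ℕ) (r : ℕ → ℝ) where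
  Jset : List ℕ → Set (Pt d)
  root_eq : Jset [] = J
  similar : ∀ w, IsWord n w → ∃ (S : Pt d → Pt d) (c : ℝ), 0 < c ∧
      (∀ x y, dist (S x) (S y) = c * dist x y) ∧ Jset w = S '' J
  nested : ∀ w, IsWord n w → ∀ a, 1 ≤ a → a ≤ n w.length →
      Jset (w ++ [a]) ⊆ Jset w
  disjoint_int : ∀ w, IsWord n w → ∀ a b, 1 ≤ a → a ≤ n w.length →
      1 ≤ b → b ≤ n w.length → a ≠ b →
      interior (Jset (w ++ [a])) ∩ interior (Jset (w ++ [b])) = ∅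
  diam_ratio : ∀ w, IsWord n w → ∀ a, 1 ≤ a → a ≤ n w.length →
      Metric.diam (Jset (w ++ [a])) = r w.length * Metric.diam (Jset w)

/-- Standing hypotheses on the Moran data; `R` plays the role of `r = inf_k r_k > 0`. -/
structure MoranData (d : ℕ) (J : Set (Pt d)) (n : ℕ → ℕ) (r : ℕ → ℝ) (R : ℝ) : Prop where
  dim_pos : 1 ≤ d
  compact : IsCompact J
  int_nonempty : (interior J).Nonempty
  two_le : ∀ k, 2 ≤ n k
  r_pos : ∀ k, 0 < r k
  r_lt_one : ∀ k, r k < 1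
  nr_le : ∀ k, (n k : ℝ) * r k ≤ 1
  R_pos : 0 < R
  R_inf : R = ⨅ k, r k

/-- The Moran set `E = ⋂_k ⋃_{w ∈ D_k} J_w`. -/
def MoranSet {d : ℕ} {J : Set (Pt d)} {n : ℕ → ℕ} {r : ℕ → ℝ}
    (M : MoranStructure d J n r) : Set (Pt d) :=
  ⋂ k, ⋃ w ∈ WordsLen n k, M.Jset w

/-- The product `r_1 ⋯ r_k`. -/
def prodR (r : ℕ → ℝ) (k : ℕ) : ℝ := ∏ j ∈ Finset.range k, r j

/-- The level `X_m`:  `X_0 = {∅}`, and for `m ≥ 1`,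
`X_m = {w : r_1⋯r_k ≤ R^m < r_1⋯r_{k-1}}` where `k` is the length of `w`. -/
def XLevel (n : ℕ → ℕ) (r : ℕ → ℝ) (R : ℝ) (m : ℕ) : Set (List ℕ) :=
  if m = 0 then {([] : List ℕ)}
  else {w | IsWord n w ∧ prodR r w.length ≤ R ^ m ∧ R ^ m < prodR r (w.length - 1)}

/-- The vertex set `X = ⋃_m X_m`. -/
def XV (n : ℕ → ℕ) (r : ℕ → ℝ) (R : ℝ) : Set (List ℕ) := ⋃ m, XLevel n r R m

/-- `v` is the parent (first ancestor) of `u`:  `v` is the initial segment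
of `u` lying one level above `u`. -/
def IsParent (n : ℕ → ℕ) (r : ℕ → ℝ) (R : ℝ) (v u : List ℕ) : Prop :=
  v ≠ u ∧ v <+: u ∧ ∃ m, 1 ≤ m ∧ u ∈ XLevel n r R m ∧ v ∈ XLevel n r R (m - 1)

/-- Vertical edge relation `𝔈_v` (as an unordered relation). -/
def Evert (n : ℕ → ℕ) (r : ℕ → ℝ) (R : ℝ) (u v : List ℕ) : Prop :=
  IsParent n r R u v ∨ IsParent n r R v u

variable {d : ℕ} {J : Set (Pt d)} {n : ℕ → ℕ} {r : ℕ → ℝ}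

/-- Horizontal edge relation `𝔈_h`: distinct words on a common level `X_m`, `m ≥ 1`,
whose Moran pieces intersect. -/
def Ehor (M : MoranStructure d J n r) (R : ℝ) (u v : List ℕ) : Prop :=
  u ≠ v ∧ ∃ m, 1 ≤ m ∧ u ∈ XLevel n r R m ∧ v ∈ XLevel n r R m ∧
    (M.Jset u ∩ M.Jset v).Nonempty

/-- The induced augmented tree `(X, 𝔈)`, `𝔈 = 𝔈_v ∪ 𝔈_h`, as a graph on all words
(words outside `X` are isolated vertices). -/
def AugGraph (M : MoranStructure d J n r) (R : ℝ) : SimpleGraph (List ℕ) where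
  Adj u v := Evert n r R u v ∨ Ehor M R u v
  symm := ⟨by
    rintro u v (h | ⟨hne, m, hm, hu, hv, hJ⟩)
    · exact Or.inl h.symm
    · exact Or.inr ⟨hne.symm, m, hm, hv, hu, by rwa [Set.inter_comm]⟩⟩
  loopless := ⟨by
    rintro u ((⟨h, -⟩ | ⟨h, -⟩) | ⟨h, -⟩) <;> exact h rfl⟩

/-- The tree `(X, 𝔈_v)` with only the vertical edges. -/
def TreeGraph (n : ℕ → ℕ) (r : ℕ → ℝ) (R : ℝ) : SimpleGraph (List ℕ) where
  Adj u v := Evert n r R u v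
  symm := ⟨fun _ _ h => h.symm⟩
  loopless := ⟨by rintro u (⟨h, -⟩ | ⟨h, -⟩) <;> exact h rfl⟩

/-- The graph `(X, 𝔈_h)` with only the horizontal edges. -/
def HorGraph (M : MoranStructure d J n r) (R : ℝ) : SimpleGraph (List ℕ) where
  Adj u v := Ehor M R u v
  symm := ⟨by
    rintro u v ⟨hne, m, hm, hu, hv, hJ⟩
    exact ⟨hne.symm, m, hm, hv, hu, by rwa [Set.inter_comm]⟩⟩
  loopless := ⟨by rintro u ⟨h, -⟩; exact h rfl⟩

/-- Gromov product `⟨x,y⟩ = (d(o,x) + d(o,y) - d(x,y))/2` with respect to a base point `o`. -/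
def gromovD {V : Type*} (G : SimpleGraph V) (o x y : V) : ℝ :=
  ((G.dist o x : ℝ) + (G.dist o y : ℝ) - (G.dist x y : ℝ)) / 2

/-- Condition (H): there is `C' > 0` such that on every level `X_m` (`m ≥ 1`),
two pieces either intersect or are at distance at least `C' R^m`. -/
def CondH (M : MoranStructure d J n r) (R : ℝ) : Prop :=
  ∃ C' : ℝ, 0 < C' ∧ ∀ m, 1 ≤ m → ∀ u ∈ XLevel n r R m, ∀ v ∈ XLevel n r R m,
    (M.Jset u ∩ M.Jset v).Nonempty ∨
    ∀ p ∈ M.Jset u, ∀ q ∈ M.Jset v, C' * R ^ m ≤ dist p q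

/-- `T` is a horizontal connected component: a maximal subset of some level `X_m`
which is connected in the horizontal graph. -/
def IsHCC (M : MoranStructure d J n r) (R : ℝ) (T : Set (List ℕ)) : Prop :=
  ∃ m, T ⊆ XLevel n r R m ∧ ((HorGraph M R).induce T).Connected ∧
    ∀ T', T ⊆ T' → T' ⊆ XLevel n r R m → ((HorGraph M R).induce T').Connected → T' = T

/-- The common suffix set `Σ_m` of the level `X_m`: words `w` with `uw ∈ X_{m+1}`
for (some, equivalently all) `u ∈ X_m`. -/
def SigmaSet (n : ℕ → ℕ) (r : ℕ → ℝ) (R : ℝ) (m : ℕ) : Set (List ℕ) :=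
  {w | ∃ u ∈ XLevel n r R m, u ++ w ∈ XLevel n r R (m + 1)}

/-- The offspring set `TΣ_m ⊆ X_{m+1}` of a set `T ⊆ X_m`. -/
def TSigma (n : ℕ → ℕ) (r : ℕ → ℝ) (R : ℝ) (m : ℕ) (T : Set (List ℕ)) : Set (List ℕ) :=
  {x | ∃ u ∈ T, ∃ w ∈ SigmaSet n r R m, x = u ++ w}

/-- The augmented tree is rearrangeable:  horizontal connected components have
uniformly bounded cardinality, and for every horizontal connected component `T ⊆ X_m`
with `#T = b`, the offspring set `TΣ_m` can be partitioned into `b` groups (indexed by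
the elements of `T`), each group being a union of horizontal connected components and
having exactly `#Σ_m` elements. -/
def Rearrangeable (M : MoranStructure d J n r) (R : ℝ) : Prop :=
  (∃ L : ℕ, ∀ T, IsHCC M R T → T.Finite ∧ T.ncard ≤ L) ∧
  ∀ m T, T ⊆ XLevel n r R m → IsHCC M R T →
    ∃ g : List ℕ → List ℕ,
      (∀ x ∈ TSigma n r R m T, g x ∈ T) ∧
      (∀ Z, IsHCC M R Z → Z ⊆ TSigma n r R m T → ∀ x ∈ Z, ∀ y ∈ Z, g x = g y) ∧
      (∀ i ∈ T, {x ∈ TSigma n r R m T | g x = i}.ncard = (SigmaSet n r R m).ncard)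

/-- `C` is a (topological) connected component of `A`. -/
def IsRelCC {α : Type*} [TopologicalSpace α] (C A : Set α) : Prop :=
  ∃ x ∈ A, C = connectedComponentIn A x

/-- Condition (v): there is `L` such that any `T ⊆ D_{k-1}` for which `⋃_{i∈T} J_i`
is a connected component of `⋃_{i∈D_{k-1}} J_i` satisfies `#T ≤ L`. -/
def CondV (M : MoranStructure d J n r) : Prop :=
  ∃ L : ℕ, ∀ k, 1 ≤ k → ∀ T ⊆ WordsLen n (k - 1),
    IsRelCC (⋃ i ∈ T, M.Jset i) (⋃ i ∈ WordsLen n (k - 1), M.Jset i) →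
    T.Finite ∧ T.ncard ≤ L

/-- Condition (vi): for any such `T` (with `#T = b`), the connected components of
`⋃_{i∈T} ⋃_{j=1}^{n_k} J_{ij}` can be partitioned into `b` groups (indexed by the
elements of `T`) so that the union of the components in each group is a union of
exactly `n_k` of the sets `J_{ij}`. -/
def CondVI (M : MoranStructure d J n r) : Prop :=
  ∀ k, 1 ≤ k → ∀ T ⊆ WordsLen n (k - 1),
    IsRelCC (⋃ i ∈ T, M.Jset i) (⋃ i ∈ WordsLen n (k - 1), M.Jset i) →
    ∃ f : Set (Pt d) → List ℕ,
      (∀ C, IsRelCC C (⋃ u ∈ T, ⋃ j ∈ Set.Icc 1 (n (k - 1)), M.Jset (u ++ [j])) → f C ∈ T) ∧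
      ∀ i ∈ T, ∃ W : Finset (List ℕ × ℕ),
        (∀ p ∈ W, p.1 ∈ T ∧ 1 ≤ p.2 ∧ p.2 ≤ n (k - 1)) ∧
        W.card = n (k - 1) ∧
        (⋃ C ∈ {C | IsRelCC C (⋃ u ∈ T, ⋃ j ∈ Set.Icc 1 (n (k - 1)), M.Jset (u ++ [j]))
            ∧ f C = i}, C)
          = ⋃ p ∈ W, M.Jset (p.1 ++ [p.2])

/-- A geodesic ray of the induced augmented tree: `u_m ∈ X_m` and `u_m = (u_{m+1})⁻¹`. -/
def IsRay (n : ℕ → ℕ) (r : ℕ → ℝ) (R : ℝ) (u : ℕ → List ℕ) : Prop :=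
  (∀ m, u m ∈ XLevel n r R m) ∧ ∀ m, IsParent n r R (u m) (u (m + 1))

/-- Geodesic rays as a type. -/
def MRay (n : ℕ → ℕ) (r : ℕ → ℝ) (R : ℝ) := {u : ℕ → List ℕ // IsRay n r R u}

/-- `t(ξ,η) = liminf_m ⟨u_m, v_m⟩`, valued in `EReal`. -/
def tLim {V : Type*} (G : SimpleGraph V) (o : V) (u v : ℕ → V) : EReal :=
  Filter.liminf (fun m => ((gromovD G o (u m) (v m) : ℝ) : EReal)) Filter.atTop

/-- `R ^ t` for `t ∈ EReal`, with the convention `R ^ ∞ = 0`. -/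
def rpowE (R : ℝ) (t : EReal) : ℝ := if t = ⊤ then 0 else R ^ t.toReal

/-- The hyperbolic boundary of the induced augmented tree: equivalence classes of
geodesic rays, two rays being equivalent when `t(ξ,η) = ∞`. -/
def MBoundary (M : MoranStructure d J n r) (R : ℝ) :=
  Quot (fun ξ η : MRay n r R => tLim (AugGraph M R) [] ξ.1 η.1 = ⊤)

/-- The class of a ray in the hyperbolic boundary. -/
def mkB (M : MoranStructure d J n r) (R : ℝ) (ξ : MRay n r R) : MBoundary M R :=
  Quot.mk _ ξ

/-- The metric `ρ_a` on the hyperbolic boundary: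
`ρ_a(ξ̄,η̄) = exp(-a · inf{t(ξ,η) : ξ ∈ ξ̄, η ∈ η̄})` for distinct classes, and `0` otherwise. -/
def mrho (M : MoranStructure d J n r) (R a : ℝ) (p q : MBoundary M R) : ℝ :=
  if p = q then 0
  else Real.exp (-a * (sInf {s : EReal | ∃ ξ η : MRay n r R,
    mkB M R ξ = p ∧ mkB M R η = q ∧ s = tLim (AugGraph M R) [] ξ.1 η.1}).toReal)

/-- An abstract augmented tree in the sense of Kaimanovich: a rooted tree (encoded
by a parent map and a level function) together with a symmetric horizontal edge
relation `Eh` joining distinct vertices of a common level whose parents are equal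
or horizontally joined. -/
structure AugmentedTree (V : Type*) where
  root : V
  parent : V → V
  lvl : V → ℕ
  lvl_root : lvl root = 0
  lvl_parent : ∀ x, x ≠ root → lvl (parent x) + 1 = lvl x
  Eh : V → V → Prop
  Eh_symm : ∀ x y, Eh x y → Eh y x
  Eh_ne : ∀ x y, Eh x y → x ≠ y
  Eh_lvl : ∀ x y, Eh x y → lvl x = lvl y
  Eh_parent : ∀ x y, Eh x y → parent x = parent y ∨ Eh (parent x) (parent y)

namespace AugmentedTree

variable {V : Type*} (T : AugmentedTree V)

/-- The vertical (tree) edge relation. -/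
def Ev (x y : V) : Prop :=
  (x ≠ T.root ∧ T.parent x = y) ∨ (y ≠ T.root ∧ T.parent y = x)

/-- The graph `(X, 𝔈)`, `𝔈 = 𝔈_v ∪ 𝔈_h`. -/
def graph : SimpleGraph V where
  Adj x y := x ≠ y ∧ (T.Ev x y ∨ T.Eh x y)
  symm := ⟨by
    rintro x y ⟨hne, h | h⟩
    · exact ⟨hne.symm, Or.inl h.symm⟩
    · exact ⟨hne.symm, Or.inr (T.Eh_symm x y h)⟩⟩
  loopless := ⟨fun _ h => h.1 rfl⟩

/-- Gromov product `⟨x,y⟩ = (|x| + |y| - d(x,y))/2` (one has `d(o,x) = |x| = lvl x`). -/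
def gromov (x y : V) : ℝ :=
  ((T.lvl x : ℝ) + (T.lvl y : ℝ) - (T.graph.dist x y : ℝ)) / 2

/-- Gromov hyperbolicity. -/
def Hyperbolic : Prop :=
  ∃ δ : ℝ, 0 ≤ δ ∧ ∀ x y z : V,
    min (T.gromov x z) (T.gromov z y) - δ ≤ T.gromov x y

/-- A geodesic ray from the root: `x_0 = o` and `x_m = (x_{m+1})⁻¹`. -/
def IsRayT (x : ℕ → V) : Prop := x 0 = T.root ∧ ∀ m, T.parent (x (m + 1)) = x m

/-- Geodesic rays from the root, as a type. -/
def Ray := {x : ℕ → V // T.IsRayT x}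

/-- `t(ξ,η) = liminf_m ⟨x_m, y_m⟩`, valued in `EReal`. -/
def tvalT (ξ η : T.Ray) : EReal :=
  Filter.liminf (fun m => ((T.gromov (ξ.1 m) (η.1 m) : ℝ) : EReal)) Filter.atTop

/-- The hyperbolic boundary: classes of geodesic rays, two rays being equivalent
when `t(ξ,η) = ∞`. -/
def Boundary := Quot (fun ξ η : T.Ray => T.tvalT ξ η = ⊤)

/-- The class of a ray in the boundary. -/
def mkBd (ξ : T.Ray) : T.Boundary := Quot.mk _ ξ

/-- The metric `ρ_a` on the hyperbolic boundary. -/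
def rho (a : ℝ) (p q : T.Boundary) : ℝ :=
  if p = q then 0
  else Real.exp (-a * (sInf {s : EReal | ∃ ξ η : T.Ray,
    T.mkBd ξ = p ∧ T.mkBd η = q ∧ s = T.tvalT ξ η}).toReal)

end AugmentedTree

end MoranPaper

end
noncomputable section

namespace MoranPaper

open Metric Set MeasureTheory Bornology
open scoped ENNReal NNReal

variable {d : ℕ} {J : Set (Pt d)} {n : ℕ → ℕ} {r : ℕ → ℝ} {R : ℝ}

lemma prodR_pos (hr : ∀ k, 0 < r k) (k : ℕ) : 0 < prodR r k :=
  Finset.prod_pos fun j _ => hr j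

lemma prodR_succ (r : ℕ → ℝ) (k : ℕ) : prodR r (k + 1) = prodR r k * r k :=
  Finset.prod_range_succ r k

lemma prodR_anti (hr0 : ∀ k, 0 < r k) (hr1 : ∀ k, r k ≤ 1) {j k : ℕ} (h : j ≤ k) :
    prodR r k ≤ prodR r j := by
  induction h with
  | refl => exact le_rfl
  | @step k h ih =>
    calc prodR r (k + 1) = prodR r k * r k := prodR_succ r k
      _ ≤ prodR r k * 1 := mul_le_mul_of_nonneg_left (hr1 k) (prodR_pos hr0 k).le
      _ = prodR r k := mul_one _
      _ ≤ prodR r j := ih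

lemma MoranData.R_le_r (hD : MoranData d J n r R) (k : ℕ) : R ≤ r k := by
  rw [hD.R_inf]
  exact ciInf_le ⟨0, by rintro x ⟨j, rfl⟩; exact (hD.r_pos j).le⟩ k

lemma MoranData.R_lt_one (hD : MoranData d J n r R) : R < 1 :=
  (hD.R_le_r 0).trans_lt (hD.r_lt_one 0)

lemma IsWord.of_prefix {v u : List ℕ} (hv : IsWord n v) (h : u <+: v) : IsWord n u := by
  obtain ⟨t, rfl⟩ := h
  intro j hj
  have h2 : j < (u ++ t).length := by simp only [List.length_append]; omega
  have h3 := hv j h2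
  simpa [List.get_eq_getElem, List.getElem_append_left hj] using h3

lemma IsWord.letter {w t : List ℕ} {a : ℕ} (h : IsWord n (w ++ a :: t)) :
    1 ≤ a ∧ a ≤ n w.length := by
  have hlen : w.length < (w ++ a :: t).length := by simp
  have h3 := h w.length hlen
  simpa [List.get_eq_getElem, List.getElem_append_right (le_refl w.length)] using h3

lemma Jset_mono (M : MoranStructure d J n r) {w : List ℕ} :
    ∀ {t : List ℕ}, IsWord n (w ++ t) → M.Jset (w ++ t) ⊆ M.Jset w := by
  intro t
  induction t using List.reverseRecOn with
  | nil => intro _; simp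
  | append_singleton t a ih =>
    intro h
    have h2 : IsWord n ((w ++ t) ++ [a]) := by rwa [← List.append_assoc] at h
    have h1 : IsWord n (w ++ t) := h2.of_prefix ⟨[a], rfl⟩
    have hlet : 1 ≤ a ∧ a ≤ n (w ++ t).length := IsWord.letter h2
    have hnest := M.nested (w ++ t) h1 a hlet.1 hlet.2
    calc M.Jset (w ++ (t ++ [a])) = M.Jset ((w ++ t) ++ [a]) := by rw [List.append_assoc]
      _ ⊆ M.Jset (w ++ t) := hnest
      _ ⊆ M.Jset w := ih h1

lemma exists_split : ∀ (u v : List ℕ), ¬ u <+: v → ¬ v <+: u →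
    ∃ w a b s t, a ≠ b ∧ u = w ++ a :: s ∧ v = w ++ b :: t
  | [], v, h1, _ => absurd List.nil_prefix h1
  | _ :: _, [], _, h2 => absurd List.nil_prefix h2
  | x :: u, y :: v, h1, h2 => by
    by_cases hxy : x = y
    · subst hxy
      obtain ⟨w, a, b, s, t, hab, hu, hv⟩ :=
        exists_split u v (fun h => h1 (List.cons_prefix_cons.mpr ⟨rfl, h⟩))
          (fun h => h2 (List.cons_prefix_cons.mpr ⟨rfl, h⟩))
      exact ⟨x :: w, a, b, s, t, hab, by simp [hu], by simp [hv]⟩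
    · exact ⟨[], x, y, u, v, hxy, rfl, rfl⟩

lemma disjoint_interior (M : MoranStructure d J n r) {u v : List ℕ}
    (hu : IsWord n u) (hv : IsWord n v) (h1 : ¬ u <+: v) (h2 : ¬ v <+: u) :
    Disjoint (interior (M.Jset u)) (interior (M.Jset v)) := by
  obtain ⟨w, a, b, s, t, hab, rfl, rfl⟩ := exists_split u v h1 h2
  have hw : IsWord n w := hu.of_prefix ⟨a :: s, rfl⟩
  have ha := IsWord.letter hu
  have hb := IsWord.letter hv
  have hU : M.Jset (w ++ a :: s) ⊆ M.Jset (w ++ [a]) := by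
    have he : w ++ a :: s = (w ++ [a]) ++ s := by simp
    rw [he]
    exact Jset_mono M (by rwa [← he])
  have hV : M.Jset (w ++ b :: t) ⊆ M.Jset (w ++ [b]) := by
    have he : w ++ b :: t = (w ++ [b]) ++ t := by simp
    rw [he]
    exact Jset_mono M (by rwa [← he])
  have hd := M.disjoint_int w hw a b ha.1 ha.2 hb.1 hb.2 hab
  refine Set.disjoint_iff_inter_eq_empty.mpr ?_
  exact Set.subset_eq_empty
    (Set.inter_subset_inter (interior_mono hU) (interior_mono hV)) hd

lemma diam_Jset (M : MoranStructure d J n r) :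
    ∀ {u : List ℕ}, IsWord n u →
      Metric.diam (M.Jset u) = prodR r u.length * Metric.diam J := by
  intro u
  induction u using List.reverseRecOn with
  | nil => intro _; simp [M.root_eq, prodR]
  | append_singleton w a ih =>
    intro hu
    have hw : IsWord n w := hu.of_prefix ⟨[a], rfl⟩
    have ha : 1 ≤ a ∧ a ≤ n w.length := IsWord.letter hu
    rw [M.diam_ratio w hw a ha.1 ha.2, ih hw]
    have hlen : (w ++ [a]).length = w.length + 1 := by simp
    rw [hlen, prodR_succ]
    ring

lemma isCompact_Jset (M : MoranStructure d J n r) (hJc : IsCompact J) {u : List ℕ}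
    (hu : IsWord n u) : IsCompact (M.Jset u) := by
  obtain ⟨S, c, hc, hdist, him⟩ := M.similar u hu
  rw [him]
  exact hJc.image (LipschitzWith.of_dist_le_mul
    (K := ⟨c, hc.le⟩) fun x y => le_of_eq (hdist x y)).continuous

lemma similar_facts (M : MoranStructure d J n r) (hJb : IsBounded J)
    {x₀ : Pt d} {ρ : ℝ} (hρ : 0 < ρ) (hball : ball x₀ ρ ⊆ J) {u : List ℕ}
    (hu : IsWord n u) :
    ∃ c : ℝ, 0 < c ∧ Metric.diam (M.Jset u) = c * Metric.diam J ∧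
      ∃ y : Pt d, ball y (c * ρ) ⊆ M.Jset u := by
  obtain ⟨S, c, hc, hdist, him⟩ := M.similar u hu
  have hlip : LipschitzWith ⟨c, hc.le⟩ S :=
    LipschitzWith.of_dist_le_mul fun x y => le_of_eq (hdist x y)
  have himb : IsBounded (S '' J) := hlip.isBounded_image hJb
  have hdiam : Metric.diam (S '' J) = c * Metric.diam J := by
    apply le_antisymm
    · apply Metric.diam_le_of_forall_dist_le (mul_nonneg hc.le Metric.diam_nonneg)
      rintro _ ⟨x, hx, rfl⟩ _ ⟨y, hy, rfl⟩
      rw [hdist]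
      exact mul_le_mul_of_nonneg_left (Metric.dist_le_diam_of_mem hJb hx hy) hc.le
    · have h2 : Metric.diam J ≤ c⁻¹ * Metric.diam (S '' J) := by
        apply Metric.diam_le_of_forall_dist_le
          (mul_nonneg (inv_nonneg.mpr hc.le) Metric.diam_nonneg)
        intro x hx y hy
        have h3 : dist (S x) (S y) ≤ Metric.diam (S '' J) :=
          Metric.dist_le_diam_of_mem himb (Set.mem_image_of_mem S hx)
            (Set.mem_image_of_mem S hy)
        rw [hdist] at h3
        calc dist x y = c⁻¹ * (c * dist x y) := by field_simp
          _ ≤ c⁻¹ * Metric.diam (S '' J) :=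
              mul_le_mul_of_nonneg_left h3 (inv_nonneg.mpr hc.le)
      calc c * Metric.diam J ≤ c * (c⁻¹ * Metric.diam (S '' J)) :=
            mul_le_mul_of_nonneg_left h2 hc.le
        _ = Metric.diam (S '' J) := by field_simp
  set T : Pt d → Pt d := fun x => c⁻¹ • S x with hT
  have hTiso : Isometry T := Isometry.of_dist_eq fun x y => by
    rw [hT]
    simp only
    rw [dist_smul₀, hdist, norm_inv, Real.norm_of_nonneg hc.le]
    field_simp
  have hST : ∀ x, S x = c • T x := fun x => by
    rw [hT]
    simp only
    rw [smul_inv_smul₀ hc.ne']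
  have hkey : ∀ x : Pt d, T x =
      hTiso.affineIsometryOfStrictConvexSpace.linearIsometry x + T 0 := by
    intro x
    have h4 := hTiso.affineIsometryOfStrictConvexSpace.map_vadd (0 : Pt d) x
    simpa [Isometry.coe_affineIsometryOfStrictConvexSpace, vadd_eq_add] using h4
  set li := hTiso.affineIsometryOfStrictConvexSpace.linearIsometry with hli
  set e := li.toLinearIsometryEquiv rfl with he
  have hlie : ∀ x, li x = e x := fun x => by
    rw [he, LinearIsometry.coe_toLinearIsometryEquiv]
  have hTsurj : Function.Surjective T := by
    intro z
    refine ⟨e.symm (z - T 0), ?_⟩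
    rw [hkey, hlie, LinearIsometryEquiv.apply_symm_apply, sub_add_cancel]
  refine ⟨c, hc, him ▸ hdiam, S x₀, ?_⟩
  intro z hz
  obtain ⟨w, hw⟩ := hTsurj (c⁻¹ • z)
  have hSw : S w = z := by rw [hST, hw, smul_inv_smul₀ hc.ne']
  have hdw : dist w x₀ < ρ := by
    have h5 : dist w x₀ = c⁻¹ * dist z (S x₀) := by
      rw [← hTiso.dist_eq w x₀, hw]
      show dist _ (c⁻¹ • S x₀) = _
      rw [dist_smul₀, norm_inv, Real.norm_of_nonneg hc.le]
    rw [h5]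
    calc c⁻¹ * dist z (S x₀) < c⁻¹ * (c * ρ) :=
          mul_lt_mul_of_pos_left (mem_ball.mp hz) (inv_pos.mpr hc)
      _ = ρ := by field_simp
  rw [him]
  exact ⟨w, hball hdw, hSw⟩

lemma Jset_ball (M : MoranStructure d J n r) (hJb : IsBounded J)
    (hΔ : 0 < Metric.diam J) {x₀ : Pt d} {ρ : ℝ} (hρ : 0 < ρ)
    (hball : ball x₀ ρ ⊆ J) {u : List ℕ} (hu : IsWord n u) :
    ∃ y, ball y (prodR r u.length * ρ) ⊆ M.Jset u := by
  obtain ⟨c, hc, hcd, y, hy⟩ := similar_facts M hJb hρ hball hu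
  have hce : c = prodR r u.length := by
    have h2 : c * Metric.diam J = prodR r u.length * Metric.diam J := by
      rw [← hcd, diam_Jset M hu]
    exact mul_right_cancel₀ hΔ.ne' h2
  exact ⟨y, by rwa [hce] at hy⟩

lemma XLevel_len_pos (hD : MoranData d J n r R) {m : ℕ} (hm : m ≠ 0) {u : List ℕ}
    (hu : u ∈ XLevel n r R m) :
    IsWord n u ∧ 1 ≤ u.length ∧ prodR r u.length ≤ R ^ m ∧
      R ^ m < prodR r (u.length - 1) := by
  rw [XLevel, if_neg hm] at hu
  obtain ⟨h1, h2, h3⟩ := hu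
  refine ⟨h1, ?_, h2, h3⟩
  by_contra h
  have hlen : u.length = 0 := by omega
  rw [hlen] at h2
  have h4 : prodR r 0 = 1 := by simp [prodR]
  rw [h4] at h2
  have h5 : R ^ m < 1 := pow_lt_one₀ hD.R_pos.le hD.R_lt_one hm
  linarith

lemma XLevel_zero_mem {u : List ℕ} (hu : u ∈ XLevel n r R 0) : u = [] := by
  rw [XLevel, if_pos rfl] at hu
  simpa using hu

lemma level_lt_false (hD : MoranData d J n r R) {u : List ℕ} {m1 m2 : ℕ} (h : m1 < m2)
    (h1 : u ∈ XLevel n r R m1) (h2 : u ∈ XLevel n r R m2) : False := by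
  have hm2 : m2 ≠ 0 := by omega
  obtain ⟨hw2, hl2, hle2, hgt2⟩ := XLevel_len_pos hD hm2 h2
  rcases Nat.eq_zero_or_pos m1 with rfl | hm1pos
  · have hnil : u = [] := XLevel_zero_mem h1
    rw [hnil] at hl2
    simp at hl2
  · have hm1 : m1 ≠ 0 := by omega
    obtain ⟨hw1, hl1, hle1, hgt1⟩ := XLevel_len_pos hD hm1 h1
    have hsucc : u.length - 1 + 1 = u.length := by omega
    have hprod : prodR r u.length = prodR r (u.length - 1) * r (u.length - 1) := by
      conv_lhs => rw [← hsucc]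
      rw [prodR_succ]
    have hRm : R ^ m2 ≤ R ^ (m1 + 1) :=
      pow_le_pow_of_le_one hD.R_pos.le hD.R_lt_one.le (by omega)
    have h5 : prodR r (u.length - 1) * R ≤ R ^ m1 * R := by
      calc prodR r (u.length - 1) * R ≤ prodR r (u.length - 1) * r (u.length - 1) :=
            mul_le_mul_of_nonneg_left (hD.R_le_r _) (prodR_pos hD.r_pos _).le
        _ = prodR r u.length := hprod.symm
        _ ≤ R ^ m2 := hle2
        _ ≤ R ^ (m1 + 1) := hRm
        _ = R ^ m1 * R := by ring
    have h6 : prodR r (u.length - 1) ≤ R ^ m1 := le_of_mul_le_mul_right h5 hD.R_pos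
    linarith

lemma level_unique (hD : MoranData d J n r R) {u : List ℕ} {m1 m2 : ℕ}
    (h1 : u ∈ XLevel n r R m1) (h2 : u ∈ XLevel n r R m2) : m1 = m2 := by
  rcases lt_trichotomy m1 m2 with h | h | h
  · exact absurd (level_lt_false hD h h1 h2) id
  · exact h
  · exact absurd (level_lt_false hD h h2 h1) id

lemma not_strictPrefix (hD : MoranData d J n r R) {u v : List ℕ} {m1 m2 : ℕ}
    (hm1 : m1 ≠ 0) (hm : m2 ≤ m1) (h1 : u ∈ XLevel n r R m1)
    (h2 : v ∈ XLevel n r R m2) (hp : u <+: v) (hne : u ≠ v) : False := by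
  rcases Nat.eq_zero_or_pos m2 with rfl | hm2pos
  · have hnil : v = [] := XLevel_zero_mem h2
    subst hnil
    obtain ⟨t, ht⟩ := hp
    exact hne (List.append_eq_nil_iff.mp ht).1
  · have hm2 : m2 ≠ 0 := by omega
    obtain ⟨hw1, hl1, hle1, hgt1⟩ := XLevel_len_pos hD hm1 h1
    obtain ⟨hw2, hl2, hle2, hgt2⟩ := XLevel_len_pos hD hm2 h2
    have hlen : u.length < v.length :=
      lt_of_le_of_ne hp.length_le fun he => hne (hp.eq_of_length he)
    have h3 : prodR r (v.length - 1) ≤ prodR r u.length :=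
      prodR_anti hD.r_pos (fun k => (hD.r_lt_one k).le) (by omega)
    have h4 : R ^ m1 ≤ R ^ m2 :=
      pow_le_pow_of_le_one hD.R_pos.le hD.R_lt_one.le hm
    linarith

lemma prodR_gt (hD : MoranData d J n r R) {m : ℕ} (hm : m ≠ 0) {u : List ℕ}
    (hu : u ∈ XLevel n r R m) : R ^ (m + 1) < prodR r u.length := by
  obtain ⟨hw, hl, hle, hgt⟩ := XLevel_len_pos hD hm hu
  have hsucc : u.length - 1 + 1 = u.length := by omega
  have hprod : prodR r u.length = prodR r (u.length - 1) * r (u.length - 1) := by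
    conv_lhs => rw [← hsucc]
    rw [prodR_succ]
  calc R ^ (m + 1) = R ^ m * R := by ring
    _ < prodR r (u.length - 1) * R := mul_lt_mul_of_pos_right hgt hD.R_pos
    _ ≤ prodR r (u.length - 1) * r (u.length - 1) :=
        mul_le_mul_of_nonneg_left (hD.R_le_r _) (prodR_pos hD.r_pos _).le
    _ = prodR r u.length := hprod.symm

lemma count_le (M : MoranStructure d J n r) (hd1 : 1 ≤ d) {A : Set (List ℕ)}
    {a b : ℝ} (ha : 0 < a) (K : ℕ) (p : Pt d) (hK : b ^ d ≤ (K : ℝ) * a ^ d)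
    (hdisj : A.Pairwise fun u v => Disjoint (interior (M.Jset u)) (interior (M.Jset v)))
    (hball : ∀ u ∈ A, ∃ y, ball y a ⊆ M.Jset u)
    (hsub : ∀ u ∈ A, M.Jset u ⊆ closedBall p b) :
    A.Finite ∧ A.ncard ≤ K := by
  haveI : Nontrivial (Pt d) := by
    apply Module.nontrivial_of_finrank_pos (R := ℝ)
    rw [finrank_euclideanSpace_fin]
    omega
  have key : ∀ F : Finset (List ℕ), ↑F ⊆ A → F.card ≤ K := by
    intro F hF
    rcases F.eq_empty_or_nonempty with rfl | ⟨u0, hu0⟩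
    · simp
    have hb0 : 0 ≤ b := by
      obtain ⟨y, hy⟩ := hball u0 (hF hu0)
      have hmem : y ∈ closedBall p b := hsub u0 (hF hu0) (hy (mem_ball_self ha))
      exact le_trans dist_nonneg hmem
    set μ := (volume : Measure (Pt d)) with hμ
    set B := μ (ball (0 : Pt d) 1) with hB
    have hlow : ∀ u ∈ F, ENNReal.ofReal (a ^ d) * B ≤ μ (interior (M.Jset u)) := by
      intro u hu
      obtain ⟨y, hy⟩ := hball u (hF hu)
      have h1 : ball y a ⊆ interior (M.Jset u) := interior_maximal hy isOpen_ball
      calc ENNReal.ofReal (a ^ d) * B = μ (ball y a) := by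
            rw [Measure.addHaar_ball μ y ha.le, finrank_euclideanSpace_fin]
        _ ≤ μ (interior (M.Jset u)) := measure_mono h1
    have hsum : (F.card : ℝ≥0∞) * (ENNReal.ofReal (a ^ d) * B) ≤
        ENNReal.ofReal (b ^ d) * B := by
      calc (F.card : ℝ≥0∞) * (ENNReal.ofReal (a ^ d) * B)
          = F.card • (ENNReal.ofReal (a ^ d) * B) := (nsmul_eq_mul _ _).symm
        _ ≤ ∑ u ∈ F, μ (interior (M.Jset u)) :=
            Finset.card_nsmul_le_sum F _ _ hlow
        _ = μ (⋃ u ∈ F, interior (M.Jset u)) :=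
            (measure_biUnion_finset (hdisj.mono hF)
              fun u _ => isOpen_interior.measurableSet).symm
        _ ≤ μ (closedBall p b) := measure_mono (Set.iUnion₂_subset fun u hu =>
            interior_subset.trans (hsub u (hF hu)))
        _ = ENNReal.ofReal (b ^ d) * B := by
            rw [Measure.addHaar_closedBall μ p hb0, finrank_euclideanSpace_fin]
    have hBpos : B ≠ 0 := (measure_ball_pos μ 0 one_pos).ne'
    have hBne : B ≠ ⊤ := measure_ball_lt_top.ne
    have hane : ENNReal.ofReal (a ^ d) ≠ 0 :=
      (ENNReal.ofReal_pos.mpr (pow_pos ha d)).ne'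
    have hane2 : ENNReal.ofReal (a ^ d) ≠ ⊤ := ENNReal.ofReal_ne_top
    have hKb : ENNReal.ofReal (b ^ d) ≤ (K : ℝ≥0∞) * ENNReal.ofReal (a ^ d) := by
      calc ENNReal.ofReal (b ^ d) ≤ ENNReal.ofReal ((K : ℝ) * a ^ d) :=
            ENNReal.ofReal_le_ofReal hK
        _ = ENNReal.ofReal (K : ℝ) * ENNReal.ofReal (a ^ d) :=
            ENNReal.ofReal_mul (Nat.cast_nonneg K)
        _ = (K : ℝ≥0∞) * ENNReal.ofReal (a ^ d) := by rw [ENNReal.ofReal_natCast]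
    have hfinal : (F.card : ℝ≥0∞) ≤ (K : ℝ≥0∞) := by
      have h8 : (F.card : ℝ≥0∞) * (ENNReal.ofReal (a ^ d) * B) ≤
          (K : ℝ≥0∞) * (ENNReal.ofReal (a ^ d) * B) := by
        refine hsum.trans ?_
        rw [← mul_assoc]
        exact mul_le_mul_left (hKb.trans_eq rfl) B
      exact (ENNReal.mul_le_mul_iff_left (mul_ne_zero hane hBpos)
        (ENNReal.mul_ne_top hane2 hBne)).mp h8
    exact_mod_cast hfinal
  have hfin : A.Finite := by
    by_contra hinf
    obtain ⟨t, htA, htf, htc⟩ := Set.Infinite.exists_subset_ncard_eq hinf (K + 1)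
    have h9 := key htf.toFinset (by simpa using htA)
    rw [← Set.ncard_eq_toFinset_card t htf] at h9
    omega
  refine ⟨hfin, ?_⟩
  rw [Set.ncard_eq_toFinset_card A hfin]
  exact key hfin.toFinset (by simp)

end MoranPaper

end
set_option maxHeartbeats 1000000 in
/-- the induced augmented tree has uniformly bounded vertex degrees;
in particular it is locally finite. -/
theorem MoranPaper.statement1 (d : ℕ) (J : Set (MoranPaper.Pt d)) (n : ℕ → ℕ) (r : ℕ → ℝ)
    (R : ℝ) (hD : MoranPaper.MoranData d J n r R) (M : MoranPaper.MoranStructure d J n r) :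
    ∃ C : ℕ, ∀ x ∈ MoranPaper.XV n r R,
      ((MoranPaper.AugGraph M R).neighborSet x).Finite ∧
      ((MoranPaper.AugGraph M R).neighborSet x).ncard ≤ C := by
  classical
  obtain ⟨x₀, hx₀⟩ := hD.int_nonempty
  obtain ⟨ρ, hρ, hballρ⟩ := Metric.isOpen_iff.mp isOpen_interior x₀ hx₀
  have hball : Metric.ball x₀ ρ ⊆ J := hballρ.trans interior_subset
  have hJb : Bornology.IsBounded J := hD.compact.isBounded
  have hρne : ρ ≠ 0 := hρ.ne'
  have hRne : R ≠ 0 := hD.R_pos.ne'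
  have hΔ : 0 < Metric.diam J := by
    haveI : Nontrivial (MoranPaper.Pt d) := by
      apply Module.nontrivial_of_finrank_pos (R := ℝ)
      rw [finrank_euclideanSpace_fin]
      have := hD.dim_pos
      omega
    obtain ⟨v, hv⟩ := exists_ne (0 : MoranPaper.Pt d)
    have hvn : 0 < ‖v‖ := norm_pos_iff.mpr hv
    set y := x₀ + (ρ / (2 * ‖v‖)) • v with hy
    have hdy : dist y x₀ = ρ / 2 := by
      rw [hy, dist_eq_norm, add_sub_cancel_left, norm_smul,
        Real.norm_of_nonneg (by positivity)]
      field_simp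
    have hymem : y ∈ Metric.ball x₀ ρ := by
      rw [Metric.mem_ball, hdy]; linarith
    have h9 := Metric.dist_le_diam_of_mem hJb (hball hymem)
      (hball (Metric.mem_ball_self hρ))
    rw [hdy] at h9
    linarith
  set K1 := ⌈(Metric.diam J / (ρ * R ^ 2)) ^ d⌉₊ with hK1def
  set K2 := ⌈(2 * Metric.diam J / (ρ * R)) ^ d⌉₊ with hK2def
  refine ⟨1 + K1 + K2, ?_⟩
  intro x hx
  rw [MoranPaper.XV, Set.mem_iUnion] at hx
  obtain ⟨m, hxm⟩ := hx
  have hxw : MoranPaper.IsWord n x ∧ MoranPaper.prodR r x.length ≤ R ^ m := by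
    rcases Nat.eq_zero_or_pos m with rfl | hm
    · have hnil : x = [] := MoranPaper.XLevel_zero_mem hxm
      subst hnil
      exact ⟨fun j hj => absurd hj (by simp), by simp [MoranPaper.prodR]⟩
    · obtain ⟨h1, -, h2, -⟩ := MoranPaper.XLevel_len_pos hD (by omega) hxm
      exact ⟨h1, h2⟩
  obtain ⟨pnt, hpnt⟩ : ∃ p, p ∈ M.Jset x := by
    obtain ⟨y, hy⟩ := MoranPaper.Jset_ball M hJb hΔ hρ hball hxw.1
    exact ⟨y, hy (Metric.mem_ball_self
      (mul_pos (MoranPaper.prodR_pos hD.r_pos _) hρ))⟩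
  have hbx : Bornology.IsBounded (M.Jset x) :=
    (MoranPaper.isCompact_Jset M hD.compact hxw.1).isBounded
  have hJx_sub : M.Jset x ⊆ Metric.closedBall pnt (Metric.diam J * R ^ m) := by
    intro z hz
    rw [Metric.mem_closedBall]
    calc dist z pnt ≤ Metric.diam (M.Jset x) := Metric.dist_le_diam_of_mem hbx hz hpnt
      _ = MoranPaper.prodR r x.length * Metric.diam J := MoranPaper.diam_Jset M hxw.1
      _ ≤ R ^ m * Metric.diam J :=
          mul_le_mul_of_nonneg_right hxw.2 Metric.diam_nonneg
      _ = Metric.diam J * R ^ m := mul_comm _ _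
  set P := {y | MoranPaper.IsParent n r R y x} with hPdef
  set Ch := {y | MoranPaper.IsParent n r R x y} with hChdef
  set Hor := {y | MoranPaper.Ehor M R x y} with hHordef
  have hPsub : P.Subsingleton := by
    intro y1 hy1 y2 hy2
    obtain ⟨hne1, hp1, m1, hm1, hx1, hy1'⟩ := hy1
    obtain ⟨hne2, hp2, m2, hm2, hx2, hy2'⟩ := hy2
    have e12 : m1 = m2 := MoranPaper.level_unique hD hx1 hx2
    subst e12
    rcases Nat.eq_zero_or_pos (m1 - 1) with hz | hpos
    · rw [hz] at hy1' hy2'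
      rw [MoranPaper.XLevel_zero_mem hy1', MoranPaper.XLevel_zero_mem hy2']
    · by_contra hne
      rcases List.prefix_or_prefix_of_prefix hp1 hp2 with h | h
      · exact MoranPaper.not_strictPrefix hD (by omega) le_rfl hy1' hy2' h hne
      · exact MoranPaper.not_strictPrefix hD (by omega) le_rfl hy2' hy1' h (Ne.symm hne)
  have hPfin : P.Finite := hPsub.finite
  have hPcard : P.ncard ≤ 1 := by
    rcases hPsub.eq_empty_or_singleton with h | ⟨a, h⟩ <;> rw [h] <;> simp
  have hCh : Ch.Finite ∧ Ch.ncard ≤ K1 := by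
    have hchlev : ∀ y ∈ Ch, y ∈ MoranPaper.XLevel n r R (m + 1) ∧ x <+: y := by
      intro y hy
      obtain ⟨hne, hpre, m', hm', hy', hx'⟩ := hy
      have hmm : m' - 1 = m := MoranPaper.level_unique hD hx' hxm
      have hmm' : m' = m + 1 := by omega
      rw [hmm'] at hy'
      exact ⟨hy', hpre⟩
    apply MoranPaper.count_le M hD.dim_pos (a := ρ * R ^ (m + 2))
      (b := Metric.diam J * R ^ m)
      (mul_pos hρ (pow_pos hD.R_pos _)) K1 pnt
    · have hbeq : Metric.diam J * R ^ m =
          (Metric.diam J / (ρ * R ^ 2)) * (ρ * R ^ (m + 2)) := by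
        field_simp
        ring
      calc (Metric.diam J * R ^ m) ^ d
          = (Metric.diam J / (ρ * R ^ 2)) ^ d * (ρ * R ^ (m + 2)) ^ d := by
            rw [hbeq, mul_pow]
        _ ≤ (K1 : ℝ) * (ρ * R ^ (m + 2)) ^ d :=
            mul_le_mul_of_nonneg_right (Nat.le_ceil _)
              (pow_nonneg (mul_pos hρ (pow_pos hD.R_pos _)).le d)
    · intro y1 hy1 y2 hy2 hne
      obtain ⟨hl1, -⟩ := hchlev y1 hy1
      obtain ⟨hl2, -⟩ := hchlev y2 hy2
      have hw1 := (MoranPaper.XLevel_len_pos hD (by omega) hl1).1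
      have hw2 := (MoranPaper.XLevel_len_pos hD (by omega) hl2).1
      exact MoranPaper.disjoint_interior M hw1 hw2
        (fun hp => MoranPaper.not_strictPrefix hD (by omega) le_rfl hl1 hl2 hp hne)
        (fun hp => MoranPaper.not_strictPrefix hD (by omega) le_rfl hl2 hl1 hp (Ne.symm hne))
    · intro y hy
      obtain ⟨hl, -⟩ := hchlev y hy
      have hwy := (MoranPaper.XLevel_len_pos hD (by omega) hl).1
      obtain ⟨z, hz⟩ := MoranPaper.Jset_ball M hJb hΔ hρ hball hwy
      refine ⟨z, (Metric.ball_subset_ball ?_).trans hz⟩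
      have hgt := MoranPaper.prodR_gt hD (by omega) hl
      calc ρ * R ^ (m + 2) = R ^ (m + 1 + 1) * ρ := by ring
        _ ≤ MoranPaper.prodR r y.length * ρ :=
            mul_le_mul_of_nonneg_right hgt.le hρ.le
    · intro y hy
      obtain ⟨hl, hpre⟩ := hchlev y hy
      have hwy := (MoranPaper.XLevel_len_pos hD (by omega) hl).1
      obtain ⟨t, rfl⟩ := hpre
      exact (MoranPaper.Jset_mono M hwy).trans hJx_sub
  have hHor : Hor.Finite ∧ Hor.ncard ≤ K2 := by
    rcases Nat.eq_zero_or_pos m with rfl | hmpos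
    · have hemp : Hor = ∅ := by
        ext y
        simp only [hHordef, Set.mem_setOf_eq, Set.mem_empty_iff_false, iff_false]
        rintro ⟨hne, m', hm', hx', hy', hi⟩
        have := MoranPaper.level_unique hD hx' hxm
        omega
      rw [hemp]
      simp
    · have hm0 : m ≠ 0 := by omega
      have hhlev : ∀ y ∈ Hor, y ∈ MoranPaper.XLevel n r R m ∧
          (M.Jset x ∩ M.Jset y).Nonempty := by
        intro y hy
        obtain ⟨hne, m', hm', hx', hy', hi⟩ := hy
        have hmm : m' = m := MoranPaper.level_unique hD hx' hxm
        rw [hmm] at hy'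
        exact ⟨hy', hi⟩
      apply MoranPaper.count_le M hD.dim_pos (a := ρ * R ^ (m + 1))
        (b := 2 * Metric.diam J * R ^ m)
        (mul_pos hρ (pow_pos hD.R_pos _)) K2 pnt
      · have hbeq : 2 * Metric.diam J * R ^ m =
            (2 * Metric.diam J / (ρ * R)) * (ρ * R ^ (m + 1)) := by
          field_simp
          ring
        calc (2 * Metric.diam J * R ^ m) ^ d
            = (2 * Metric.diam J / (ρ * R)) ^ d * (ρ * R ^ (m + 1)) ^ d := by
              rw [hbeq, mul_pow]
          _ ≤ (K2 : ℝ) * (ρ * R ^ (m + 1)) ^ d :=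
              mul_le_mul_of_nonneg_right (Nat.le_ceil _)
                (pow_nonneg (mul_pos hρ (pow_pos hD.R_pos _)).le d)
      · intro y1 hy1 y2 hy2 hne
        obtain ⟨hl1, -⟩ := hhlev y1 hy1
        obtain ⟨hl2, -⟩ := hhlev y2 hy2
        have hw1 := (MoranPaper.XLevel_len_pos hD hm0 hl1).1
        have hw2 := (MoranPaper.XLevel_len_pos hD hm0 hl2).1
        exact MoranPaper.disjoint_interior M hw1 hw2
          (fun hp => MoranPaper.not_strictPrefix hD hm0 le_rfl hl1 hl2 hp hne)
          (fun hp => MoranPaper.not_strictPrefix hD hm0 le_rfl hl2 hl1 hp (Ne.symm hne))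
      · intro y hy
        obtain ⟨hl, -⟩ := hhlev y hy
        have hwy := (MoranPaper.XLevel_len_pos hD hm0 hl).1
        obtain ⟨z, hz⟩ := MoranPaper.Jset_ball M hJb hΔ hρ hball hwy
        refine ⟨z, (Metric.ball_subset_ball ?_).trans hz⟩
        have hgt := MoranPaper.prodR_gt hD hm0 hl
        calc ρ * R ^ (m + 1) = R ^ (m + 1) * ρ := by ring
          _ ≤ MoranPaper.prodR r y.length * ρ :=
              mul_le_mul_of_nonneg_right hgt.le hρ.le
      · intro y hy
        obtain ⟨hl, q, hq1, hq2⟩ := hhlev y hy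
        obtain ⟨hwy, -, hley, -⟩ := MoranPaper.XLevel_len_pos hD hm0 hl
        have hby : Bornology.IsBounded (M.Jset y) :=
          (MoranPaper.isCompact_Jset M hD.compact hwy).isBounded
        intro z hz
        rw [Metric.mem_closedBall]
        have h1 : dist z q ≤ Metric.diam (M.Jset y) :=
          Metric.dist_le_diam_of_mem hby hz hq2
        have h2 : dist q pnt ≤ Metric.diam (M.Jset x) :=
          Metric.dist_le_diam_of_mem hbx hq1 hpnt
        have h3 : Metric.diam (M.Jset y) ≤ Metric.diam J * R ^ m := by
          rw [MoranPaper.diam_Jset M hwy]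
          calc MoranPaper.prodR r y.length * Metric.diam J
              ≤ R ^ m * Metric.diam J :=
                mul_le_mul_of_nonneg_right hley Metric.diam_nonneg
            _ = Metric.diam J * R ^ m := mul_comm _ _
        have h4 : Metric.diam (M.Jset x) ≤ Metric.diam J * R ^ m := by
          rw [MoranPaper.diam_Jset M hxw.1]
          calc MoranPaper.prodR r x.length * Metric.diam J
              ≤ R ^ m * Metric.diam J :=
                mul_le_mul_of_nonneg_right hxw.2 Metric.diam_nonneg
            _ = Metric.diam J * R ^ m := mul_comm _ _
        calc dist z pnt ≤ dist z q + dist q pnt := dist_triangle z q pnt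
          _ ≤ Metric.diam J * R ^ m + Metric.diam J * R ^ m := by linarith
          _ = 2 * Metric.diam J * R ^ m := by ring
  have hsub2 : (MoranPaper.AugGraph M R).neighborSet x ⊆ (P ∪ Ch) ∪ Hor := by
    intro y hy
    have hy' : MoranPaper.Evert n r R x y ∨ MoranPaper.Ehor M R x y := hy
    rcases hy' with (h | h) | h
    · exact Or.inl (Or.inr h)
    · exact Or.inl (Or.inl h)
    · exact Or.inr h
  have hbig : ((P ∪ Ch) ∪ Hor).Finite := (hPfin.union hCh.1).union hHor.1
  refine ⟨hbig.subset hsub2, ?_⟩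
  calc ((MoranPaper.AugGraph M R).neighborSet x).ncard
      ≤ ((P ∪ Ch) ∪ Hor).ncard := Set.ncard_le_ncard hsub2 hbig
    _ ≤ (P ∪ Ch).ncard + Hor.ncard := Set.ncard_union_le _ _
    _ ≤ (P.ncard + Ch.ncard) + Hor.ncard :=
        add_le_add_left (Set.ncard_union_le _ _) _
    _ ≤ 1 + K1 + K2 := by
        have := hCh.2
        have := hHor.2
        omega
end

section
/- Suppose J is connected and r_k ≡ r for all k (so X_n = D_n for all n), and the Moran structure satisfies conditions (v) and (vi). Then the induced augmented tree (X, 𝔈) is rearrangeable. -/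
open Metric Set Filter

attribute [local instance] Classical.propDecidable

noncomputable section StatementTenAux
namespace MoranPaper

attribute [local instance] Classical.propDecidable

variable {d : ℕ} {J : Set (Pt d)} {n : ℕ → ℕ} {ρ : ℝ}

lemma prodR_const (ρ : ℝ) (k : ℕ) : prodR (fun _ => ρ) k = ρ ^ k := by
  simp [prodR]

lemma isWord_nil : IsWord n [] := by
  intro j h
  simp at h

lemma isWord_append_singleton {w : List ℕ} {a : ℕ} :
    IsWord n (w ++ [a]) ↔ IsWord n w ∧ 1 ≤ a ∧ a ≤ n w.length := by
  constructor
  · intro h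
    refine ⟨fun j hj => ?_, ?_⟩
    · have hj' : j < (w ++ [a]).length := by simp; omega
      have := h j hj'
      simpa [List.get_eq_getElem, List.getElem_append_left hj] using this
    · have hj' : w.length < (w ++ [a]).length := by simp
      have := h w.length hj'
      simpa [List.get_eq_getElem] using this
  · rintro ⟨hw, ha1, ha2⟩ j hj
    simp only [List.length_append, List.length_singleton] at hj
    rcases lt_or_ge j w.length with hlt | hge
    · have := hw j hlt
      simpa [List.get_eq_getElem, List.getElem_append_left hlt] using this
    · have hje : j = w.length := by omega
      subst hje
      simpa [List.get_eq_getElem] using ⟨ha1, ha2⟩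

lemma xlevel_eq (hρ0 : 0 < ρ) (hρ1 : ρ < 1) {m : ℕ} (hm : 1 ≤ m) :
    XLevel n (fun _ => ρ) ρ m = WordsLen n m := by
  have anti : StrictAnti ((ρ : ℝ) ^ ·) := pow_right_strictAnti₀ hρ0 hρ1
  ext w
  simp only [XLevel, WordsLen, if_neg (by omega : ¬ m = 0), Set.mem_setOf_eq,
    prodR_const]
  constructor
  · rintro ⟨hw, h1, h2⟩
    have hml : m ≤ w.length := anti.le_iff_ge.mp h1
    have hlm : w.length - 1 < m := anti.lt_iff_gt.mp h2
    exact ⟨hw, by omega⟩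
  · rintro ⟨hw, hl⟩
    subst hl
    exact ⟨hw, le_rfl, anti (by omega)⟩

lemma mem_xlevel_zero {w : List ℕ} : w ∈ XLevel n (fun _ => ρ) ρ 0 ↔ w = [] := by
  simp [XLevel]

lemma level_unique_s10 (hρ0 : 0 < ρ) (hρ1 : ρ < 1) {u : List ℕ} {m m' : ℕ}
    (hm : u ∈ XLevel n (fun _ => ρ) ρ m) (hm' : u ∈ XLevel n (fun _ => ρ) ρ m') :
    m = m' := by
  rcases Nat.eq_zero_or_pos m with h0 | h1 <;> rcases Nat.eq_zero_or_pos m' with h0' | h1'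
  · omega
  · subst h0
    rw [mem_xlevel_zero] at hm
    rw [xlevel_eq hρ0 hρ1 h1'] at hm'
    subst hm
    have := hm'.2
    simp at this
    omega
  · subst h0'
    rw [mem_xlevel_zero] at hm'
    rw [xlevel_eq hρ0 hρ1 h1] at hm
    subst hm'
    have := hm.2
    simp at this
    omega
  · rw [xlevel_eq hρ0 hρ1 h1] at hm
    rw [xlevel_eq hρ0 hρ1 h1'] at hm'
    rw [← hm.2, ← hm'.2]

lemma wordsLen_finite (n : ℕ → ℕ) : ∀ m, (WordsLen n m).Finite := by
  intro m
  induction m with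
  | zero =>
    apply Set.Finite.subset (Set.finite_singleton ([] : List ℕ))
    intro w hw
    simpa using List.length_eq_zero_iff.mp hw.2
  | succ m ih =>
    apply Set.Finite.subset (((ih.prod (Set.finite_Icc 1 (n m))).image
      (fun p : List ℕ × ℕ => p.1 ++ [p.2])))
    intro w hw
    have hne : w ≠ [] := by
      intro h
      rw [h] at hw
      simpa using hw.2
    have hdec : w.dropLast ++ [w.getLast hne] = w := List.dropLast_append_getLast hne
    have hw' : IsWord n (w.dropLast ++ [w.getLast hne]) := by rw [hdec]; exact hw.1
    rw [isWord_append_singleton] at hw'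
    have hlen : w.dropLast.length = m := by
      have := hw.2
      simp [List.length_dropLast, this]
    refine ⟨⟨w.dropLast, w.getLast hne⟩, ⟨⟨hw'.1, hlen⟩, ?_⟩, hdec⟩
    rw [hlen] at hw'
    exact ⟨hw'.2.1, hw'.2.2⟩

lemma jset_props (M : MoranStructure d J n (fun _ => ρ)) (hJc : IsCompact J)
    (hJne : J.Nonempty) (hJpc : IsPreconnected J) {w : List ℕ} (hw : IsWord n w) :
    (M.Jset w).Nonempty ∧ IsCompact (M.Jset w) ∧ IsPreconnected (M.Jset w) := by
  obtain ⟨S, c, hc, hdist, hEq⟩ := M.similar w hw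
  have hlip : LipschitzWith c.toNNReal S := by
    apply LipschitzWith.of_dist_le_mul
    intro x y
    rw [hdist, Real.coe_toNNReal _ hc.le]
  have hcont := hlip.continuous
  rw [hEq]
  exact ⟨hJne.image _, hJc.image hcont, hJpc.image S hcont.continuousOn⟩

/-- Key walk lemma: along a horizontally connected family of preconnected pieces,
all pieces lie in one relative connected component. -/
lemma union_subset_compIn (M : MoranStructure d J n (fun _ => ρ))
    {P : Set (List ℕ)}
    (hpc : ∀ i ∈ P, IsPreconnected (M.Jset i))
    (hconn : ((HorGraph M ρ).induce P).Connected)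
    {W : Set (Pt d)} (hUW : (⋃ i ∈ P, M.Jset i) ⊆ W)
    {i0 : List ℕ} (hi0 : i0 ∈ P) {x0 : Pt d} (hx0 : x0 ∈ M.Jset i0) :
    (⋃ i ∈ P, M.Jset i) ⊆ connectedComponentIn W x0 := by
  set C := connectedComponentIn W x0 with hC
  have hsubW : ∀ i ∈ P, M.Jset i ⊆ W := fun i hi =>
    (Set.subset_biUnion_of_mem hi).trans hUW
  have base : M.Jset i0 ⊆ C := (hpc i0 hi0).subset_connectedComponentIn hx0 (hsubW i0 hi0)
  have key : ∀ (a b : ↥P) (p : ((HorGraph M ρ).induce P).Walk a b),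
      M.Jset a.1 ⊆ C → M.Jset b.1 ⊆ C := by
    intro a b p
    induction p with
    | nil => exact id
    | @cons u v w h p ih =>
      intro hsub
      apply ih
      have hadj : Ehor M ρ u.1 v.1 := h
      obtain ⟨-, m, hm, hum, hvm, z, hz⟩ := hadj
      have hzC : z ∈ C := hsub hz.1
      have heq : connectedComponentIn W x0 = connectedComponentIn W z :=
        connectedComponentIn_eq hzC
      rw [hC, heq]
      exact (hpc v.1 v.2).subset_connectedComponentIn hz.2 (hsubW v.1 v.2)
  intro x hx
  simp only [Set.mem_iUnion] at hx
  obtain ⟨i, hiP, hxi⟩ := hx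
  obtain ⟨p⟩ := hconn.preconnected ⟨i0, hi0⟩ ⟨i, hiP⟩
  exact key _ _ p base hxi
/-- The topological component of a point of `⋃_{i ∈ T} J_i` in `⋃_{D_m} J_i` equals
`⋃_{i ∈ T} J_i`, when `T` is a horizontal connected component of level `m ≥ 1`. -/
lemma hcc_isRelCC (M : MoranStructure d J n (fun _ => ρ))
    (hρ0 : 0 < ρ) (hρ1 : ρ < 1) (hJc : IsCompact J) (hJne : J.Nonempty)
    (hJpc : IsPreconnected J) {m : ℕ} (hm : 1 ≤ m) {T : Set (List ℕ)}
    (hTsub : T ⊆ XLevel n (fun _ => ρ) ρ m)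
    (hconn : ((HorGraph M ρ).induce T).Connected)
    (hmax : ∀ T', T ⊆ T' → T' ⊆ XLevel n (fun _ => ρ) ρ m →
      ((HorGraph M ρ).induce T').Connected → T' = T) :
    IsRelCC (⋃ i ∈ T, M.Jset i) (⋃ i ∈ WordsLen n m, M.Jset i) := by
  have hXW : XLevel n (fun _ => ρ) ρ m = WordsLen n m := xlevel_eq hρ0 hρ1 hm
  have hTW : T ⊆ WordsLen n m := hXW ▸ hTsub
  have hprops : ∀ i ∈ WordsLen n m,
      (M.Jset i).Nonempty ∧ IsCompact (M.Jset i) ∧ IsPreconnected (M.Jset i) :=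
    fun i hi => jset_props M hJc hJne hJpc hi.1
  obtain ⟨⟨i0, hi0⟩⟩ := hconn.nonempty
  obtain ⟨x0, hx0⟩ := (hprops i0 (hTW hi0)).1
  set Big := ⋃ i ∈ WordsLen n m, M.Jset i with hBig
  have hUBig : (⋃ i ∈ T, M.Jset i) ⊆ Big :=
    Set.biUnion_subset_biUnion_left hTW
  have hx0U : x0 ∈ ⋃ i ∈ T, M.Jset i := Set.mem_biUnion hi0 hx0
  refine ⟨x0, hUBig hx0U, ?_⟩
  set C := connectedComponentIn Big x0 with hCdef
  have hUC : (⋃ i ∈ T, M.Jset i) ⊆ C :=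
    union_subset_compIn M (fun i hi => (hprops i (hTW hi)).2.2) hconn hUBig hi0 hx0
  set S := {i | i ∈ WordsLen n m ∧ (M.Jset i ∩ C).Nonempty} with hSdef
  have hSW : S ⊆ WordsLen n m := fun i hi => hi.1
  have hSX : S ⊆ XLevel n (fun _ => ρ) ρ m := by rw [hXW]; exact hSW
  have hSJ : ∀ i ∈ S, M.Jset i ⊆ C := by
    rintro i ⟨hiW, z, hz1, hz2⟩
    have : connectedComponentIn Big x0 = connectedComponentIn Big z :=
      connectedComponentIn_eq hz2
    rw [hCdef, this]
    exact (hprops i hiW).2.2.subset_connectedComponentIn hz1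
      (Set.subset_biUnion_of_mem hiW)
  have hCS : C = ⋃ i ∈ S, M.Jset i := by
    apply Set.Subset.antisymm
    · intro x hx
      have hxB : x ∈ Big := connectedComponentIn_subset Big x0 hx
      simp only [hBig, Set.mem_iUnion] at hxB
      obtain ⟨i, hiW, hxi⟩ := hxB
      exact Set.mem_biUnion ⟨hiW, x, hxi, hx⟩ hxi
    · exact Set.iUnion₂_subset hSJ
  have hTS : T ⊆ S := by
    intro i hi
    obtain ⟨y, hy⟩ := (hprops i (hTW hi)).1
    exact ⟨hTW hi, y, hy, hUC (Set.mem_biUnion hi hy)⟩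
  have hSfin : S.Finite := (wordsLen_finite n m).subset hSW
  -- S is connected in the horizontal graph
  have hi0S : i0 ∈ S := hTS hi0
  set A := {i | ∃ h : i ∈ S, ((HorGraph M ρ).induce S).Reachable ⟨i0, hi0S⟩ ⟨i, h⟩}
    with hAdef
  have hAS : A ⊆ S := fun i hi => hi.1
  have hi0A : i0 ∈ A := ⟨hi0S, SimpleGraph.Reachable.refl _⟩
  have hdisj : (⋃ i ∈ A, M.Jset i) ∩ (⋃ i ∈ S \ A, M.Jset i) = ∅ := by
    by_contra h
    obtain ⟨z, hz1, hz2⟩ := Set.nonempty_iff_ne_empty.mpr h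
    simp only [Set.mem_iUnion] at hz1 hz2
    obtain ⟨a, ha, hza⟩ := hz1
    obtain ⟨b, hb, hzb⟩ := hz2
    have hab : a ≠ b := by
      rintro rfl
      exact hb.2 ha
    have hadj : ((HorGraph M ρ).induce S).Adj ⟨a, hAS ha⟩ ⟨b, hb.1⟩ := by
      show Ehor M ρ a b
      exact ⟨hab, m, hm, hSX (hAS ha), hSX hb.1, z, hza, hzb⟩
    obtain ⟨haS, hreach⟩ := ha
    have : b ∈ A := ⟨hb.1, (hreach.trans hadj.reachable :)⟩
    exact hb.2 this
  have hBempty : S \ A = ∅ := by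
    by_contra h
    obtain ⟨b, hb⟩ := Set.nonempty_iff_ne_empty.mpr h
    have hclosed : ∀ (Q : Set (List ℕ)), Q ⊆ S → IsClosed (⋃ i ∈ Q, M.Jset i) := by
      intro Q hQ
      exact Set.Finite.isClosed_biUnion (hSfin.subset hQ)
        (fun i hi => (hprops i (hSW (hQ hi))).2.1.isClosed)
    have hpre : IsPreconnected C := isPreconnected_connectedComponentIn
    have hcover : C ⊆ (⋃ i ∈ A, M.Jset i) ∪ (⋃ i ∈ S \ A, M.Jset i) := by
      rw [hCS]
      intro x hx
      simp only [Set.mem_iUnion] at hx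
      obtain ⟨i, hiS, hxi⟩ := hx
      by_cases hiA : i ∈ A
      · exact Or.inl (Set.mem_biUnion hiA hxi)
      · exact Or.inr (Set.mem_biUnion ⟨hiS, hiA⟩ hxi)
    have hCA : (C ∩ ⋃ i ∈ A, M.Jset i).Nonempty := by
      obtain ⟨y, hy⟩ := (hprops i0 (hTW hi0)).1
      exact ⟨y, hSJ i0 hi0S hy, Set.mem_biUnion hi0A hy⟩
    have hCB : (C ∩ ⋃ i ∈ S \ A, M.Jset i).Nonempty := by
      obtain ⟨y, hy⟩ := (hprops b (hSW hb.1)).1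
      exact ⟨y, hSJ b hb.1 hy, Set.mem_biUnion hb hy⟩
    obtain ⟨z, hz⟩ := (isPreconnected_closed_iff.mp hpre) _ _
      (hclosed A hAS) (hclosed (S \ A) Set.diff_subset) hcover hCA hCB
    rw [Set.mem_inter_iff] at hz
    exact absurd hdisj (Set.nonempty_iff_ne_empty.mp ⟨z, hz.2⟩)
  have hSA : S ⊆ A := by
    intro i hi
    by_contra hiA
    exact absurd hBempty (Set.nonempty_iff_ne_empty.mp ⟨i, hi, hiA⟩)
  have hSconn : ((HorGraph M ρ).induce S).Connected := by
    rw [SimpleGraph.connected_iff]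
    refine ⟨?_, ⟨⟨i0, hi0S⟩⟩⟩
    intro a b
    obtain ⟨ha', hra⟩ := hSA a.2
    obtain ⟨hb', hrb⟩ := hSA b.2
    have ha2 : (⟨a.1, ha'⟩ : ↥S) = a := Subtype.ext rfl
    have hb2 : (⟨b.1, hb'⟩ : ↥S) = b := Subtype.ext rfl
    rw [ha2] at hra
    rw [hb2] at hrb
    exact hra.symm.trans hrb
  have hST : S = T := hmax S hTS hSX hSconn
  have hfinal : C = ⋃ i ∈ T, M.Jset i := by rw [hCS, hST]
  exact hfinal.symm
lemma isWord_replicate (hn : ∀ k, 2 ≤ n k) (m : ℕ) : IsWord n (List.replicate m 1) := by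
  intro j hj
  simp only [List.get_eq_getElem, List.getElem_replicate]
  exact ⟨le_rfl, by have := hn j; omega⟩

lemma replicate_mem_xlevel (hρ0 : 0 < ρ) (hρ1 : ρ < 1) (hn : ∀ k, 2 ≤ n k) (m : ℕ) :
    List.replicate m 1 ∈ XLevel n (fun _ => ρ) ρ m := by
  rcases Nat.eq_zero_or_pos m with h0 | h1
  · subst h0
    simp [XLevel]
  · rw [xlevel_eq hρ0 hρ1 h1]
    exact ⟨isWord_replicate hn m, List.length_replicate⟩

lemma sigmaSet_eq (hρ0 : 0 < ρ) (hρ1 : ρ < 1) (hn : ∀ k, 2 ≤ n k) (m : ℕ) :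
    SigmaSet n (fun _ => ρ) ρ m = (fun a => [a]) '' (Set.Icc 1 (n m)) := by
  ext w
  constructor
  · rintro ⟨u, hu, huw⟩
    rw [xlevel_eq hρ0 hρ1 (by omega)] at huw
    have hulen : u.length = m := by
      rcases Nat.eq_zero_or_pos m with h0 | h1
      · subst h0
        rw [mem_xlevel_zero] at hu
        simp [hu]
      · rw [xlevel_eq hρ0 hρ1 h1] at hu
        exact hu.2
    have hwlen : w.length = 1 := by
      have := huw.2
      simp only [List.length_append] at this
      omega
    obtain ⟨a, rfl⟩ := List.length_eq_one_iff.mp hwlen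
    have := isWord_append_singleton.mp huw.1
    rw [hulen] at this
    exact ⟨a, ⟨this.2.1, this.2.2⟩, rfl⟩
  · rintro ⟨a, ⟨ha1, ha2⟩, rfl⟩
    refine ⟨List.replicate m 1, replicate_mem_xlevel hρ0 hρ1 hn m, ?_⟩
    rw [xlevel_eq hρ0 hρ1 (by omega)]
    constructor
    · rw [isWord_append_singleton]
      exact ⟨isWord_replicate hn m, ha1, by simpa using ha2⟩
    · simp

lemma sigmaSet_ncard (hρ0 : 0 < ρ) (hρ1 : ρ < 1) (hn : ∀ k, 2 ≤ n k) (m : ℕ) :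
    (SigmaSet n (fun _ => ρ) ρ m).ncard = n m := by
  rw [sigmaSet_eq hρ0 hρ1 hn m]
  rw [Set.ncard_image_of_injective _ (fun a b h => by simpa using h)]
  rw [show (Set.Icc 1 (n m)) = ↑(Finset.Icc 1 (n m)) by simp]
  rw [Set.ncard_coe_finset, Nat.card_Icc]
  omega
end MoranPaper
end StatementTenAux
/-- if `J` is connected, the ratio is constant, and conditions (v) and (vi)
hold, then the induced augmented tree is rearrangeable. -/
theorem MoranPaper.statement10 (d : ℕ) (hd : 1 ≤ d) (J : Set (MoranPaper.Pt d))
    (hJconn : IsConnected J) (hJc : IsCompact J) (hJint : (interior J).Nonempty)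
    (n : ℕ → ℕ) (hn : ∀ k, 2 ≤ n k) (ρ : ℝ) (hρ0 : 0 < ρ) (hρ1 : ρ < 1)
    (hnρ : ∀ k, (n k : ℝ) * ρ ≤ 1)
    (M : MoranPaper.MoranStructure d J n (fun _ => ρ))
    (hV : MoranPaper.CondV M) (hVI : MoranPaper.CondVI M) :
    MoranPaper.Rearrangeable M ρ := by
  classical
  have hJne : J.Nonempty := hJconn.nonempty
  have hJpc : IsPreconnected J := hJconn.isPreconnected
  obtain ⟨L, hL⟩ := hV
  constructor
  · -- bounded horizontal components
    refine ⟨L + 1, ?_⟩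
    rintro T ⟨m, hTsub, hconn, hmax⟩
    obtain ⟨⟨i0, hi0⟩⟩ := hconn.nonempty
    rcases Nat.eq_zero_or_pos m with h0 | h1
    · subst h0
      have hTe : T = {[]} := by
        apply Set.Subset.antisymm
        · intro w hw
          exact MoranPaper.mem_xlevel_zero.mp (hTsub hw)
        · intro w hw
          rw [Set.mem_singleton_iff] at hw
          subst hw
          have h2 := MoranPaper.mem_xlevel_zero.mp (hTsub hi0)
          rwa [← h2]
      rw [hTe]
      refine ⟨Set.finite_singleton _, ?_⟩
      rw [Set.ncard_singleton]
      omega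
    · have hrel := MoranPaper.hcc_isRelCC M hρ0 hρ1 hJc hJne hJpc h1 hTsub hconn hmax
      have hres := hL (m + 1) (by omega) T
        (by simpa using ((MoranPaper.xlevel_eq hρ0 hρ1 h1) ▸ hTsub)) (by simpa using hrel)
      exact ⟨hres.1, hres.2.trans (by omega)⟩
  · -- rearrangement
    intro m T hTsub0 hT
    obtain ⟨m', hTsub, hconn, hmax⟩ := hT
    obtain ⟨⟨i0, hi0⟩⟩ := hconn.nonempty
    have hmm : m' = m := MoranPaper.level_unique_s10 hρ0 hρ1 (hTsub hi0) (hTsub0 hi0)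
    subst hmm
    rcases Nat.eq_zero_or_pos m' with h0 | h1
    · subst h0
      have hTe : T = {[]} := by
        apply Set.Subset.antisymm
        · intro w hw
          exact MoranPaper.mem_xlevel_zero.mp (hTsub hw)
        · intro w hw
          rw [Set.mem_singleton_iff] at hw
          subst hw
          have h2 := MoranPaper.mem_xlevel_zero.mp (hTsub hi0)
          rwa [← h2]
      refine ⟨fun _ => [], ?_, ?_, ?_⟩
      · intro x hx
        rw [hTe]
        exact rfl
      · intro Z hZ hZs x hx y hy
        rfl
      · intro i hi
        rw [hTe, Set.mem_singleton_iff] at hi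
        subst hi
        have hse : {x ∈ MoranPaper.TSigma n (fun _ => ρ) ρ 0 T | (fun _ => ([] : List ℕ)) x = []}
            = MoranPaper.SigmaSet n (fun _ => ρ) ρ 0 := by
          ext x
          simp [MoranPaper.TSigma, hTe]
        rw [hse]
    · -- main case m ≥ 1
      have hXW : MoranPaper.XLevel n (fun _ => ρ) ρ m' = MoranPaper.WordsLen n m' :=
        MoranPaper.xlevel_eq hρ0 hρ1 h1
      have hTW : T ⊆ MoranPaper.WordsLen n m' := hXW ▸ hTsub
      have hrel := MoranPaper.hcc_isRelCC M hρ0 hρ1 hJc hJne hJpc h1 hTsub hconn hmax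
      obtain ⟨f, hf1, hf2⟩ := hVI (m' + 1) (by omega) T (by simpa using hTW) (by simpa using hrel)
      simp only [Nat.add_sub_cancel] at hf1 hf2
      set UU := ⋃ u ∈ T, ⋃ j ∈ Set.Icc 1 (n m'), M.Jset (u ++ [j]) with hUU
      have hSig := MoranPaper.sigmaSet_eq hρ0 hρ1 hn m'
      have hdecomp : ∀ x ∈ MoranPaper.TSigma n (fun _ => ρ) ρ m' T,
          ∃ u ∈ T, ∃ a, 1 ≤ a ∧ a ≤ n m' ∧ x = u ++ [a] := by
        rintro x ⟨u, hu, w, hw, rfl⟩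
        rw [hSig] at hw
        obtain ⟨a, ⟨ha1, ha2⟩, rfl⟩ := hw
        exact ⟨u, hu, a, ha1, ha2, rfl⟩
      have hxprops : ∀ x ∈ MoranPaper.TSigma n (fun _ => ρ) ρ m' T,
          (M.Jset x).Nonempty ∧ IsPreconnected (M.Jset x) ∧ M.Jset x ⊆ UU := by
        intro x hx
        obtain ⟨u, hu, a, ha1, ha2, rfl⟩ := hdecomp x hx
        have hword : MoranPaper.IsWord n (u ++ [a]) := by
          rw [MoranPaper.isWord_append_singleton]
          refine ⟨(hTW hu).1, ha1, ?_⟩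
          rw [(hTW hu).2]
          exact ha2
        have hprop := MoranPaper.jset_props M hJc hJne hJpc hword
        refine ⟨hprop.1, hprop.2.2, ?_⟩
        rw [hUU]
        intro y hy
        exact Set.mem_biUnion hu (Set.mem_biUnion (Set.mem_Icc.mpr ⟨ha1, ha2⟩) hy)
      set g : List ℕ → List ℕ := fun x =>
        if h : x ∈ MoranPaper.TSigma n (fun _ => ρ) ρ m' T then
          f (connectedComponentIn UU ((hxprops x h).1.some)) else [] with hg
      have hgmem : ∀ x ∈ MoranPaper.TSigma n (fun _ => ρ) ρ m' T, g x ∈ T := by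
        intro x hx
        rw [hg]
        simp only [dif_pos hx]
        exact hf1 _ ⟨(hxprops x hx).1.some, (hxprops x hx).2.2 (hxprops x hx).1.some_mem, rfl⟩
      refine ⟨g, hgmem, ?_, ?_⟩
      · -- constancy on horizontal components of the offspring
        intro Z hZ hZsub x hx y hy
        obtain ⟨mz, hZs, hZconn, -⟩ := hZ
        have hxT := hZsub hx
        have hyT := hZsub hy
        rw [hg]
        simp only [dif_pos hxT, dif_pos hyT]
        have hUZ : (⋃ i ∈ Z, M.Jset i) ⊆ UU := by
          intro p hp
          simp only [Set.mem_iUnion] at hp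
          obtain ⟨z, hz, hpz⟩ := hp
          exact (hxprops z (hZsub hz)).2.2 hpz
        have hkey := MoranPaper.union_subset_compIn M
          (fun i hi => (hxprops i (hZsub hi)).2.1) hZconn hUZ hx (hxprops x hxT).1.some_mem
        have hy' : (hxprops y hyT).1.some ∈
            connectedComponentIn UU (hxprops x hxT).1.some :=
          hkey (Set.mem_biUnion hy (hxprops y hyT).1.some_mem)
        rw [connectedComponentIn_eq hy']
      · -- the counting
        intro i hi
        have hTfin : T.Finite := (MoranPaper.wordsLen_finite n m').subset hTW
        set t := hTfin.toFinset with ht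
        set Sf : Finset (List ℕ) := (Finset.Icc 1 (n m')).image (fun a => [a]) with hSf
        have hSfc : ∀ w, w ∈ Sf ↔ w ∈ MoranPaper.SigmaSet n (fun _ => ρ) ρ m' := by
          intro w
          rw [hSig]
          simp [hSf]
        set s : Finset (List ℕ) := t.biUnion (fun u => Sf.image (fun w => u ++ w)) with hs
        have hsmem : ∀ x, x ∈ s ↔ x ∈ MoranPaper.TSigma n (fun _ => ρ) ρ m' T := by
          intro x
          simp only [hs, Finset.mem_biUnion, Finset.mem_image, ht, Set.Finite.mem_toFinset]
          constructor
          · rintro ⟨u, hu, w, hw, rfl⟩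
            exact ⟨u, hu, w, (hSfc w).mp hw, rfl⟩
          · rintro ⟨u, hu, w, hw, rfl⟩
            exact ⟨u, hu, w, (hSfc w).mpr hw, rfl⟩
        have hSfcard : Sf.card = n m' := by
          rw [hSf, Finset.card_image_of_injective _ (fun a b h => by simpa using h),
            Nat.card_Icc]
          omega
        have hlen : ∀ u ∈ T, u.length = m' := fun u hu => (hTW hu).2
        have hscard : s.card = t.card * n m' := by
          have hdisj2 : ∀ u ∈ t, ∀ u' ∈ t, u ≠ u' →
              Disjoint (Sf.image (fun w => u ++ w)) (Sf.image (fun w => u' ++ w)) := by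
            intro u hu u' hu' huu'
            rw [Finset.disjoint_left]
            rintro x hx hx'
            rw [Finset.mem_image] at hx hx'
            obtain ⟨w, hw, hxw⟩ := hx
            obtain ⟨w', hw', hxw'⟩ := hx'
            have hlu : u.length = u'.length := by
              rw [hlen u (hTfin.mem_toFinset.mp hu), hlen u' (hTfin.mem_toFinset.mp hu')]
            have heq : u ++ w = u' ++ w' := by rw [hxw, hxw']
            exact huu' (List.append_inj heq hlu).1
          have himg : ∀ u ∈ t, (Sf.image (fun w => u ++ w)).card = n m' := by
            intro u hu
            rw [Finset.card_image_of_injective _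
              (fun w w' (h : u ++ w = u ++ w') => List.append_cancel_left h), hSfcard]
          rw [hs, Finset.card_biUnion hdisj2, Finset.sum_congr rfl himg,
            Finset.sum_const, smul_eq_mul]
        have hfib : s.card = ∑ j ∈ t, (s.filter (fun x => g x = j)).card := by
          apply Finset.card_eq_sum_card_fiberwise
          intro x hx
          exact hTfin.mem_toFinset.mpr (hgmem x ((hsmem x).mp hx))
        have hlow : ∀ j ∈ t, n m' ≤ (s.filter (fun x => g x = j)).card := by
          intro j hj
          have hjT : j ∈ T := hTfin.mem_toFinset.mp hj
          obtain ⟨W, hW1, hWcard, hWeq⟩ := hf2 j hjT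
          have hesub : W.image (fun p : List ℕ × ℕ => p.1 ++ [p.2]) ⊆
              s.filter (fun x => g x = j) := by
            intro x hx
            rw [Finset.mem_image] at hx
            obtain ⟨p, hp, rfl⟩ := hx
            obtain ⟨hpT, hp1, hp2⟩ := hW1 p hp
            have hxTS : p.1 ++ [p.2] ∈ MoranPaper.TSigma n (fun _ => ρ) ρ m' T := by
              refine ⟨p.1, hpT, [p.2], ?_, rfl⟩
              rw [hSig]
              exact ⟨p.2, Set.mem_Icc.mpr ⟨hp1, hp2⟩, rfl⟩
            rw [Finset.mem_filter]
            refine ⟨(hsmem _).mpr hxTS, ?_⟩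
            have hq := (hxprops (p.1 ++ [p.2]) hxTS).1.some_mem
            have hqW : (hxprops (p.1 ++ [p.2]) hxTS).1.some ∈
                ⋃ p' ∈ W, M.Jset (p'.1 ++ [p'.2]) :=
              Set.mem_biUnion hp hq
            rw [← hWeq] at hqW
            simp only [Set.mem_iUnion, Set.mem_setOf_eq] at hqW
            obtain ⟨C, ⟨⟨y, hyUU, hCy⟩, hCf⟩, hqC⟩ := hqW
            have hcc : connectedComponentIn UU y =
                connectedComponentIn UU ((hxprops (p.1 ++ [p.2]) hxTS).1.some) := by
              apply connectedComponentIn_eq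
              rw [← hCy]
              exact hqC
            rw [hg]
            simp only [dif_pos hxTS]
            rw [← hcc, ← hCy, hCf]
          have heinj : Set.InjOn (fun p : List ℕ × ℕ => p.1 ++ [p.2]) ↑W := by
            intro p hp p' hp' hpe
            have h1 := (hW1 p (by exact_mod_cast hp)).1
            have h2 := (hW1 p' (by exact_mod_cast hp')).1
            have hlu : p.1.length = p'.1.length := by rw [hlen _ h1, hlen _ h2]
            have := List.append_inj hpe hlu
            have h3 : p.2 = p'.2 := by
              have := this.2
              simpa using this
            exact Prod.ext this.1 h3
          calc n m' = W.card := hWcard.symm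
            _ = (W.image (fun p : List ℕ × ℕ => p.1 ++ [p.2])).card :=
              (Finset.card_image_of_injOn heinj).symm
            _ ≤ (s.filter (fun x => g x = j)).card := Finset.card_le_card hesub
        have hexact : (s.filter (fun x => g x = i)).card = n m' := by
          by_contra hne2
          have hiT' : i ∈ t := hTfin.mem_toFinset.mpr hi
          have hstrict : ∑ j ∈ t, n m' < ∑ j ∈ t, (s.filter (fun x => g x = j)).card :=
            Finset.sum_lt_sum hlow ⟨i, hiT', lt_of_le_of_ne (hlow i hiT') (Ne.symm hne2)⟩
          rw [← hfib, hscard, Finset.sum_const, smul_eq_mul] at hstrict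
          exact lt_irrefl _ hstrict
        have hsetfin : {x ∈ MoranPaper.TSigma n (fun _ => ρ) ρ m' T | g x = i} =
            ↑(s.filter (fun x => g x = i)) := by
          ext x
          simp only [Set.mem_setOf_eq, Finset.coe_filter, hsmem]
        rw [hsetfin, Set.ncard_coe_finset, hexact,
          MoranPaper.sigmaSet_ncard hρ0 hρ1 hn m']
end
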